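/- Degree principle: Let f_1,…,f_m ∈ ℝ[X_1,…,X_n] be symmetric polynomials each of total degree at most d, and let S ⊆ ℝ^n be a set with the property that for all x ∈ S and all y ∈ ℝ^n, if sign(f_i(y)) = sign(f_i(x)) for every i ∈ {1,…,m}, then y ∈ S (i.e., S is a semi-algebraic set described by the polynomials f_1,…,f_m via a Boolean combination of sign conditions). Set k := max{2, d}. Then S ≠ ∅ if and only if S ∩ A_k ≠ ∅. -/

import Mathlib

open MvPolynomial Finset

open MvPolynomial Finset

lemma esymm_eq_of_psum_eq (n k : ℕ) (x y : Fin n → ℝ)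
    (h : ∀ i, 1 ≤ i → i ≤ k → eval x (psum (Fin n) ℝ i) = eval y (psum (Fin n) ℝ i)) :
    ∀ i, i ≤ k → eval x (esymm (Fin n) ℝ i) = eval y (esymm (Fin n) ℝ i) := by
  intro i
  induction i using Nat.strong_induction_on with
  | _ i ih =>
    intro hik
    rcases Nat.eq_zero_or_pos i with h0 | h0
    · subst h0; simp
    · have hx := congrArg (eval x) (mul_esymm_eq_sum (Fin n) ℝ i)
      have hy := congrArg (eval y) (mul_esymm_eq_sum (Fin n) ℝ i)
      simp only [map_mul, map_sum, map_pow, map_neg, map_one, eval_C, map_natCast] at hx hy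
      have key : (∑ a ∈ filter (fun a => a.1 < i) (antidiagonal i),
            (-1:ℝ) ^ a.1 * eval x (esymm (Fin n) ℝ a.1) * eval x (psum (Fin n) ℝ a.2)) =
          ∑ a ∈ filter (fun a => a.1 < i) (antidiagonal i),
            (-1:ℝ) ^ a.1 * eval y (esymm (Fin n) ℝ a.1) * eval y (psum (Fin n) ℝ a.2) := by
        refine Finset.sum_congr rfl ?_
        intro a ha
        simp only [Finset.mem_filter, Finset.HasAntidiagonal.mem_antidiagonal] at ha
        rw [ih a.1 ha.2 (by omega), h a.2 (by omega) (by omega)]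
      have : (i : ℝ) * eval x (esymm (Fin n) ℝ i) = (i : ℝ) * eval y (esymm (Fin n) ℝ i) := by
        rw [hx, hy, key]
      exact mul_left_cancel₀ (by exact_mod_cast h0.ne') this


lemma isHomogeneous_esymm' (n i : ℕ) : (esymm (Fin n) ℝ i).IsHomogeneous i := by
  rw [esymm]
  apply IsHomogeneous.sum
  intro t ht
  have h := IsHomogeneous.prod t (fun j => (X j : MvPolynomial (Fin n) ℝ)) (fun _ => 1)
    (fun j _ => isHomogeneous_X ℝ j)
  rwa [Finset.sum_const, smul_eq_mul, mul_one, (Finset.mem_powersetCard.mp ht).2] at h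

lemma eval_eq_of_esymm_eq (n k : ℕ) (f : MvPolynomial (Fin n) ℝ) (hsym : f.IsSymmetric)
    (hdeg : f.totalDegree ≤ k) (x y : Fin n → ℝ)
    (h : ∀ i, 1 ≤ i → i ≤ k → eval x (esymm (Fin n) ℝ i) = eval y (esymm (Fin n) ℝ i)) :
    eval x f = eval y f := by
  classical
  obtain ⟨q, hq⟩ := esymmAlgHom_fin_surjective (R := ℝ) (le_refl n) ⟨f, hsym⟩
  set E : Fin n → MvPolynomial (Fin n) ℝ := fun i => esymm (Fin n) ℝ ((i : ℕ) + 1) with hE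
  have hfq : f = aeval E q := by
    have h1 := congrArg Subtype.val hq
    rw [esymmAlgHom_apply] at h1
    exact h1.symm
  set w : Fin n → ℕ := fun i => (i : ℕ) + 1 with hw
  -- aeval E maps weighted-homogeneous to homogeneous
  have hhom : ∀ (r : MvPolynomial (Fin n) ℝ) (δ : ℕ), r.IsWeightedHomogeneous w δ →
      (aeval E r).IsHomogeneous δ := by
    intro r δ hr
    have hrs : aeval E r = ∑ u ∈ r.support, C (coeff u r) * ∏ i ∈ u.support, E i ^ u i := by
      conv_lhs => rw [r.as_sum]
      rw [map_sum]
      refine Finset.sum_congr rfl fun u hu => ?_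
      rw [aeval_monomial]
      rfl
    rw [hrs]
    apply IsHomogeneous.sum
    intro u hu
    have hprod : (∏ i ∈ u.support, E i ^ u i).IsHomogeneous
        (∑ i ∈ u.support, ((i : ℕ) + 1) * u i) := by
      apply IsHomogeneous.prod
      intro i _
      exact (isHomogeneous_esymm' n ((i : ℕ) + 1)).pow (u i)
    have hweight : (∑ i ∈ u.support, ((i : ℕ) + 1) * u i) = δ := by
      have := hr (mem_support_iff.mp hu)
      rw [← this, Finsupp.weight_apply, Finsupp.sum]
      exact Finset.sum_congr rfl fun i _ => (mul_comm _ _).trans rfl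
    rw [hweight] at hprod
    simpa using hprod.C_mul (coeff u r)
  -- decomposition of q into weighted homogeneous components
  have hfin := weightedHomogeneousComponent_finsupp (w := w) q
  set T := hfin.toFinset with hT
  have hq_sum : q = ∑ δ ∈ T, weightedHomogeneousComponent w δ q := by
    conv_lhs => rw [← sum_weightedHomogeneousComponent w q]
    rw [finsum_eq_sum _ hfin]
  have hcomp : ∀ δ : ℕ, aeval E (weightedHomogeneousComponent w δ q)
      = homogeneousComponent δ f := by
    intro δ
    have hf2 : f = ∑ δ' ∈ T, aeval E (weightedHomogeneousComponent w δ' q) := by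
      rw [hfq]
      conv_lhs => rw [hq_sum]
      rw [map_sum]
    rw [hf2, map_sum]
    have hterm : ∀ δ' ∈ T, homogeneousComponent δ (aeval E (weightedHomogeneousComponent w δ' q))
        = if δ = δ' then aeval E (weightedHomogeneousComponent w δ' q) else 0 := by
      intro δ' _
      exact homogeneousComponent_of_mem ((mem_homogeneousSubmodule _ _).mpr
        (hhom _ δ' (weightedHomogeneousComponent_isWeightedHomogeneous δ' q)))
    rw [Finset.sum_congr rfl hterm, Finset.sum_ite_eq T δ
      (fun δ' => aeval E (weightedHomogeneousComponent w δ' q))]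
    by_cases hδ : δ ∈ T
    · rw [if_pos hδ]
    · rw [if_neg hδ]
      have : weightedHomogeneousComponent w δ q = 0 := by
        by_contra hne
        exact hδ (Set.Finite.mem_toFinset _ |>.mpr hne)
      rw [this, map_zero]
  set p := ∑ δ ∈ Finset.range (k + 1), weightedHomogeneousComponent w δ q with hp
  have hfp : aeval E p = f := by
    rw [map_sum]
    have h1 : ∀ δ ∈ Finset.range (k + 1), aeval E (weightedHomogeneousComponent w δ q)
        = homogeneousComponent δ f := fun δ _ => hcomp δ
    rw [Finset.sum_congr rfl h1]
    have h2 : ∑ δ ∈ Finset.range (f.totalDegree + 1), homogeneousComponent δ f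
        = ∑ δ ∈ Finset.range (k + 1), homogeneousComponent δ f := by
      refine Finset.sum_subset (Finset.range_subset_range.mpr (by omega)) ?_
      intro δ _ hδ
      simp only [Finset.mem_range, not_lt] at hδ
      exact homogeneousComponent_eq_zero δ f (by omega)
    rw [← h2, sum_homogeneousComponent f]
  have hvars : ∀ u ∈ p.support, ∀ i : Fin n, u i ≠ 0 → (i : ℕ) + 1 ≤ k := by
    intro u hu i hui
    obtain ⟨δ, hδmem, hδ⟩ := Finset.mem_biUnion.mp (MvPolynomial.support_sum hu)
    have hco := mem_support_iff.mp hδ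
    rw [coeff_weightedHomogeneousComponent] at hco
    by_cases hww : Finsupp.weight w u = δ
    · have hle : ((i : ℕ) + 1) ≤ Finsupp.weight w u := by
        rw [Finsupp.weight_apply, Finsupp.sum]
        calc ((i : ℕ) + 1) ≤ u i • w i := by
              simp only [smul_eq_mul, hw]
              have : 1 ≤ u i := Nat.one_le_iff_ne_zero.mpr hui
              nlinarith
        _ ≤ _ := Finset.single_le_sum (f := fun j => u j • w j)
              (fun _ _ => Nat.zero_le _) (Finsupp.mem_support_iff.mpr hui)
      rw [hww] at hle
      have : δ ≤ k := by
        have := Finset.mem_range.mp hδmem; omega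
      omega
    · rw [if_neg hww] at hco; exact absurd rfl hco
  have heval : ∀ (r : MvPolynomial (Fin n) ℝ) (z : Fin n → ℝ),
      eval z (aeval E r) = eval (fun i => eval z (E i)) r := by
    intro r z
    have h1 := aeval_bind₁ (R := ℝ) z E r
    exact h1
  have hx : eval x f = eval (fun i => eval x (E i)) p := by rw [← hfp, heval]
  have hy : eval y f = eval (fun i => eval y (E i)) p := by rw [← hfp, heval]
  rw [hx, hy, eval_eq, eval_eq]
  refine Finset.sum_congr rfl fun u hu => ?_
  congr 1
  refine Finset.prod_congr rfl fun i hi => ?_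
  have hne := Finsupp.mem_support_iff.mp hi
  rw [hE]
  rw [h ((i : ℕ) + 1) (by omega) (hvars u hu i hne)]


lemma exists_few_values (n k : ℕ) (hk : 2 ≤ k) (x : Fin n → ℝ) :
    ∃ y : Fin n → ℝ, (Set.range y).ncard ≤ k ∧
      ∀ i, 1 ≤ i → i ≤ k → ∑ j, y j ^ i = ∑ j, x j ^ i := by
  by_cases hnk : n ≤ k
  · refine ⟨x, ?_, fun _ _ _ => rfl⟩
    calc (Set.range x).ncard = (x '' Set.univ).ncard := by rw [Set.image_univ]
      _ ≤ (Set.univ : Set (Fin n)).ncard := Set.ncard_image_le Set.finite_univ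
      _ = n := by rw [Set.ncard_univ, Nat.card_eq_fintype_card, Fintype.card_fin]
      _ ≤ k := hnk
  push_neg at hnk
  set F : ℕ → (Fin n → ℝ) → ℝ := fun i y => ∑ j, y j ^ (i + 1) with hF
  set V : Set (Fin n → ℝ) := {y | ∀ i : Fin k, F i y = F i x} with hV
  have hxV : x ∈ V := fun i => rfl
  have hFcont : ∀ i : ℕ, Continuous (F i) := fun i =>
    continuous_finset_sum _ fun j _ => (continuous_apply j).pow _
  have hVclosed : IsClosed V := by
    have hVi : V = ⋂ i : Fin k, {y | F i y = F i x} := by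
      ext y; simp [hV, Set.mem_iInter]
    rw [hVi]
    exact isClosed_iInter fun i => isClosed_eq (hFcont i) continuous_const
  set R := Real.sqrt (∑ j, x j ^ 2) with hR
  have hRnn : 0 ≤ R := Real.sqrt_nonneg _
  have hbdd : V ⊆ Metric.closedBall 0 R := by
    intro y hy
    rw [mem_closedBall_zero_iff, pi_norm_le_iff_of_nonneg hRnn]
    intro j
    have h2 : ∑ j', y j' ^ 2 = ∑ j', x j' ^ 2 := by
      have h3 := hy ⟨1, by omega⟩
      simpa [hF] using h3
    have h1 : y j ^ 2 ≤ ∑ j', y j' ^ 2 :=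
      Finset.single_le_sum (fun j' _ => sq_nonneg (y j')) (Finset.mem_univ j)
    rw [h2] at h1
    have h4 : |y j| ≤ R := by
      rw [hR, ← Real.sqrt_sq_eq_abs]
      exact Real.sqrt_le_sqrt h1
    simpa [Real.norm_eq_abs] using h4
  have hVcompact : IsCompact V :=
    Metric.isCompact_of_isClosed_isBounded hVclosed
      (Metric.isBounded_closedBall.subset hbdd)
  obtain ⟨y₀, hy₀V, hmin⟩ := hVcompact.exists_isMinOn ⟨x, hxV⟩ (hFcont k).continuousOn
  set D : ℕ → (Fin n → ℝ) →L[ℝ] ℝ := fun i =>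
    ∑ j, ((i + 1 : ℝ) * y₀ j ^ i) • ContinuousLinearMap.proj j with hD
  have hDeriv : ∀ i : ℕ, HasStrictFDerivAt (F i) (D i) y₀ := by
    intro i
    apply HasStrictFDerivAt.fun_sum
    intro j _
    have h1 : HasStrictDerivAt (fun t : ℝ => t ^ (i + 1))
        (((i : ℝ) + 1) * y₀ j ^ i) (y₀ j) := by
      have := hasStrictDerivAt_pow (i + 1) (y₀ j)
      simpa using this
    have h2 : HasStrictFDerivAt (fun y : Fin n → ℝ => y j)
        (ContinuousLinearMap.proj j : (Fin n → ℝ) →L[ℝ] ℝ) y₀ := hasStrictFDerivAt_apply j y₀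
    exact h1.comp_hasStrictFDerivAt y₀ h2
  have hextr : IsLocalExtrOn (F k) {y | ∀ i : Fin k, F (i : ℕ) y = F (i : ℕ) y₀} y₀ := by
    have hVeq : {y | ∀ i : Fin k, F (i : ℕ) y = F (i : ℕ) y₀} = V := by
      ext y
      simp only [hV, Set.mem_setOf_eq]
      constructor
      · intro hy i; rw [hy i]; exact hy₀V i
      · intro hy i; rw [hy i]; exact (hy₀V i).symm
    rw [hVeq]
    exact (hmin.filter_mono (Filter.le_principal_iff.mpr self_mem_nhdsWithin)).isExtr
  obtain ⟨Λ, Λ₀, hne, hsum⟩ := hextr.exists_multipliers_of_hasStrictFDerivAt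
    (fun i : Fin k => hDeriv (i : ℕ)) (hDeriv k)
  set Q : Polynomial ℝ := Polynomial.C (Λ₀ * ((k : ℝ) + 1)) * Polynomial.X ^ k
      + ∑ i : Fin k, Polynomial.C (Λ i * ((i : ℝ) + 1)) * Polynomial.X ^ (i : ℕ) with hQ
  have hDapp : ∀ (i : ℕ) (j : Fin n), D i (Pi.single j 1) = ((i : ℝ) + 1) * y₀ j ^ i := by
    intro i j
    rw [hD]
    simp only [ContinuousLinearMap.sum_apply, ContinuousLinearMap.smul_apply,
      ContinuousLinearMap.proj_apply, smul_eq_mul]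
    rw [Finset.sum_eq_single j]
    · simp
    · intro j' _ hj'; simp [Pi.single_apply, hj']
    · intro hj; exact absurd (Finset.mem_univ j) hj
  have hroot : ∀ j, Q.eval (y₀ j) = 0 := by
    intro j
    have h1 := ContinuousLinearMap.ext_iff.mp hsum (Pi.single j 1)
    simp only [ContinuousLinearMap.add_apply, ContinuousLinearMap.sum_apply,
      ContinuousLinearMap.smul_apply, ContinuousLinearMap.zero_apply, smul_eq_mul] at h1
    rw [hDapp k j] at h1
    have h1' : (∑ i : Fin k, Λ i * (((i : ℝ) + 1) * y₀ j ^ (i : ℕ)))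
        + Λ₀ * (((k : ℝ) + 1) * y₀ j ^ k) = 0 := by
      rw [← h1]
      congr 1
      exact Finset.sum_congr rfl fun i _ => by rw [hDapp (i : ℕ) j]
    have h2 : Q.eval (y₀ j) = Λ₀ * ((k : ℝ) + 1) * y₀ j ^ k
        + ∑ i : Fin k, Λ i * ((i : ℝ) + 1) * y₀ j ^ (i : ℕ) := by
      rw [hQ]
      simp [Polynomial.eval_finset_sum]
    have h3 : ∑ i : Fin k, Λ i * (((i : ℝ) + 1) * y₀ j ^ (i : ℕ))
        = ∑ i : Fin k, Λ i * ((i : ℝ) + 1) * y₀ j ^ (i : ℕ) :=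
      Finset.sum_congr rfl fun i _ => (mul_assoc _ _ _).symm
    rw [h2]
    rw [h3] at h1'
    linarith
  have hcoeffQ : ∀ m : ℕ, Q.coeff m = 0 → True := fun _ _ => trivial
  have hycard : (Set.range y₀).ncard ≤ k := by
    by_contra hcon
    push_neg at hcon
    have hfin : (Set.range y₀).Finite := Set.finite_range y₀
    have hcard : k + 1 ≤ hfin.toFinset.card := by
      rw [← Set.ncard_eq_toFinset_card _ hfin]
      omega
    obtain ⟨t, hts, htcard⟩ := Finset.exists_subset_card_eq hcard
    have htroot : ∀ z ∈ t, Q.eval z = 0 := by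
      intro z hz
      obtain ⟨j, rfl⟩ := (Set.Finite.mem_toFinset hfin).mp (hts hz)
      exact hroot j
    have hQ0 : Q = 0 := by
      by_contra hQne
      have h4 : t ⊆ Q.roots.toFinset := fun z hz =>
        Multiset.mem_toFinset.mpr (Polynomial.mem_roots'.mpr ⟨hQne, htroot z hz⟩)
      have h5 : t.card ≤ Q.natDegree :=
        le_trans (Finset.card_le_card h4)
          (le_trans (Multiset.toFinset_card_le _) (Polynomial.card_roots' Q))
      have h6 : Q.natDegree ≤ k := by
        rw [hQ]
        refine le_trans (Polynomial.natDegree_add_le _ _) (max_le ?_ ?_)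
        · exact Polynomial.natDegree_C_mul_X_pow_le _ _
        · refine Polynomial.natDegree_sum_le_of_forall_le _ _ fun i _ => ?_
          exact le_trans (Polynomial.natDegree_C_mul_X_pow_le _ _) (by omega)
      omega
    have hcoeff : ∀ m : ℕ, Polynomial.coeff (Polynomial.C (Λ₀ * ((k : ℝ) + 1))
        * Polynomial.X ^ k + ∑ i : Fin k, Polynomial.C (Λ i * ((i : ℝ) + 1))
        * Polynomial.X ^ (i : ℕ)) m = 0 := by
      intro m
      rw [← hQ, hQ0, Polynomial.coeff_zero]
    have hΛ₀ : Λ₀ = 0 := by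
      have h7 := hcoeff k
      rw [Polynomial.coeff_add, Polynomial.coeff_C_mul, Polynomial.coeff_X_pow, if_pos rfl,
        Polynomial.finset_sum_coeff] at h7
      have h8 : ∑ i : Fin k, (Polynomial.C (Λ i * ((i : ℝ) + 1))
          * Polynomial.X ^ (i : ℕ)).coeff k = 0 := by
        refine Finset.sum_eq_zero fun i _ => ?_
        rw [Polynomial.coeff_C_mul, Polynomial.coeff_X_pow, if_neg (Nat.ne_of_gt i.isLt),
          mul_zero]
      rw [h8, add_zero, mul_one] at h7
      have h9 : ((k : ℝ) + 1) ≠ 0 := by positivity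
      rcases mul_eq_zero.mp h7 with h | h
      · exact h
      · exact absurd h h9
    have hΛ : Λ = 0 := by
      funext i
      have h7 := hcoeff (i : ℕ)
      rw [Polynomial.coeff_add, Polynomial.coeff_C_mul, Polynomial.coeff_X_pow,
        if_neg (Nat.ne_of_lt i.isLt), mul_zero, zero_add,
        Polynomial.finset_sum_coeff] at h7
      rw [Finset.sum_eq_single i] at h7
      · rw [Polynomial.coeff_C_mul, Polynomial.coeff_X_pow, if_pos rfl, mul_one] at h7
        have h9 : ((i : ℝ) + 1) ≠ 0 := by positivity
        rcases mul_eq_zero.mp h7 with h | h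
        · exact h
        · exact absurd h h9
      · intro i' _ hi'
        rw [Polynomial.coeff_C_mul, Polynomial.coeff_X_pow,
          if_neg (fun hh => hi' (Fin.ext hh.symm)), mul_zero]
      · intro hi; exact absurd (Finset.mem_univ i) hi
    exact hne (by rw [Prod.ext_iff]; exact ⟨hΛ, hΛ₀⟩)
  refine ⟨y₀, hycard, ?_⟩
  intro i hi1 hik
  have h10 := hy₀V ⟨i - 1, by omega⟩
  rw [hF] at h10
  simpa [Nat.sub_add_cancel hi1] using h10

/-- **Degree principle.**  If `S ⊆ ℝ^n` is a semi-algebraic set described by sign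
conditions on symmetric polynomials `f_1,…,f_m` of degree at most `d`, then `S` is
nonempty iff it contains a point with at most `k := max 2 d` distinct coordinates. -/
theorem degree_principle (n m d : ℕ) (f : Fin m → MvPolynomial (Fin n) ℝ)
    (hsym : ∀ i, (f i).IsSymmetric) (hdeg : ∀ i, (f i).totalDegree ≤ d)
    (S : Set (Fin n → ℝ))
    (hS : ∀ x ∈ S, ∀ y : Fin n → ℝ,
      (∀ i : Fin m, Real.sign (eval y (f i)) = Real.sign (eval x (f i))) → y ∈ S) :
    S.Nonempty ↔ ∃ y ∈ S, (Set.range y).ncard ≤ max 2 d := by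
  constructor
  · rintro ⟨x, hx⟩
    set k := max 2 d with hk
    obtain ⟨y, hycard, hpow⟩ := exists_few_values n k (le_max_left 2 d) x
    have hpsum : ∀ i, 1 ≤ i → i ≤ k →
        eval y (psum (Fin n) ℝ i) = eval x (psum (Fin n) ℝ i) := by
      intro i h1 h2
      simpa [psum] using hpow i h1 h2
    have hesymm := esymm_eq_of_psum_eq n k y x hpsum
    have heq : ∀ i : Fin m, eval y (f i) = eval x (f i) := fun i =>
      eval_eq_of_esymm_eq n k (f i) (hsym i) (le_trans (hdeg i) (le_max_right 2 d)) y x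
        (fun i' _ h2 => hesymm i' h2)
    exact ⟨y, hS x hx y (fun i => by rw [heq i]), hycard⟩
  · rintro ⟨y, hy, _⟩
    exact ⟨y, hy⟩
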